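/- For any g × g complex symmetric matrix τ with positive definite imaginary part, any z ∈ ℂ^g, and any λ, μ ∈ ℤ^g, the Riemann theta function θ(z, τ) = Σ_{m ∈ ℤ^g} exp(πi mᵀ τ m + 2πi mᵀ z) satisfies θ(z + τλ + μ, τ) = exp(-2πi λᵀ z - πi λᵀ τ λ) · θ(z, τ). -/
import Mathlib

open Matrix

/-- The Riemann theta function. -/
noncomputable def theta {g : ℕ} (z : Fin g → ℂ) (τ : Matrix (Fin g) (Fin g) ℂ) : ℂ :=
  ∑' m : Fin g → ℤ,
    Complex.exp (Real.pi * Complex.I *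
        ((fun i => (m i : ℂ)) ⬝ᵥ τ.mulVec (fun i => (m i : ℂ))) +
      2 * Real.pi * Complex.I * ((fun i => (m i : ℂ)) ⬝ᵥ z))

theorem stmt5 (g : ℕ) (hg : 1 ≤ g)
    (τ : Matrix (Fin g) (Fin g) ℂ) (hτ : τ.IsSymm)
    (hpos : (Matrix.of fun i j => (τ i j).im).PosDef)
    (z : Fin g → ℂ) (l μ : Fin g → ℤ) :
    theta (fun i => z i + τ.mulVec (fun j => (l j : ℂ)) i + (μ i : ℂ)) τ =
      Complex.exp (-(2 * Real.pi * Complex.I * ((fun i => (l i : ℂ)) ⬝ᵥ z)) -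
          Real.pi * Complex.I *
            ((fun i => (l i : ℂ)) ⬝ᵥ τ.mulVec (fun i => (l i : ℂ)))) *
        theta z τ := by
  have hsym : ∀ x y : Fin g → ℂ, x ⬝ᵥ τ.mulVec y = y ⬝ᵥ τ.mulVec x := by
    intro x y
    conv_lhs => rw [dotProduct_mulVec, ← hτ.eq, vecMul_transpose]
    rw [dotProduct_comm]
  rw [theta, theta, ← tsum_mul_left]
  conv_rhs => rw [← (Equiv.addRight l).tsum_eq]
  refine tsum_congr fun m => ?_
  simp only [Equiv.coe_addRight]
  set a : Fin g → ℂ := fun i => (m i : ℂ) with ha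
  set b : Fin g → ℂ := fun i => (l i : ℂ) with hb
  set c : Fin g → ℂ := fun i => (μ i : ℂ) with hc
  have hcast : (fun i => (((m + l) i : ℤ) : ℂ)) = a + b := by
    funext i; simp [ha, hb]
  rw [hcast]
  have hzc : (fun i => z i + τ.mulVec b i + c i) = z + τ.mulVec b + c := rfl
  rw [hzc, ← Complex.exp_add]
  have hac : a ⬝ᵥ c = ((m ⬝ᵥ μ : ℤ) : ℂ) := by
    simp [dotProduct, ha, hc]
  have h1 : (a + b) ⬝ᵥ τ.mulVec (a + b)
      = a ⬝ᵥ τ.mulVec a + 2 * (a ⬝ᵥ τ.mulVec b) + b ⬝ᵥ τ.mulVec b := by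
    rw [mulVec_add]
    simp only [dotProduct_add, add_dotProduct]
    rw [hsym b a]; ring
  have key : (Real.pi : ℂ) * Complex.I * (a ⬝ᵥ τ.mulVec a) +
      2 * Real.pi * Complex.I * (a ⬝ᵥ (z + τ.mulVec b + c)) =
      (-(2 * Real.pi * Complex.I * (b ⬝ᵥ z)) -
        Real.pi * Complex.I * (b ⬝ᵥ τ.mulVec b) +
        (Real.pi * Complex.I * ((a + b) ⬝ᵥ τ.mulVec (a + b)) +
          2 * Real.pi * Complex.I * ((a + b) ⬝ᵥ z))) +
      ((m ⬝ᵥ μ : ℤ) : ℂ) * (2 * Real.pi * Complex.I) := by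
    rw [h1]
    simp only [dotProduct_add, add_dotProduct]
    rw [← hac]; ring
  rw [key, Complex.exp_add, Complex.exp_int_mul_two_pi_mul_I, mul_one]
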